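/- Let D ≥ 1, N ≥ 1 be integers, let L : (Fin N → ℝ) × (Fin D → Fin N → ℝ) → ℝ, (u,p) ↦ L(u,p), be twice continuously differentiable, and let φ : ℝ^D → (Fin N → ℝ) be twice continuously differentiable and satisfy the Euler–Lagrange equations: for every i and every x, (∂L/∂u^i)(φ(x), Dφ(x)) = Σ_{μ=0}^{D−1} ∂/∂x^μ [ (∂L/∂p_μ^i)(φ(x), Dφ(x)) ], where Dφ(x) is the array of partial derivatives (∂_μ φ^i)(x). Define the (mixed) stress-energy tensor Θ^μ_ν(x) = δ^μ_ν · L(φ(x), Dφ(x)) − Σ_i (∂L/∂p_μ^i)(φ(x), Dφ(x)) · ∂_ν φ^i(x). Then for every ν and every x, Σ_{μ=0}^{D−1} ∂_μ Θ^μ_ν(x) = 0. -/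

import Mathlib

lemma pi_decomp {N : ℕ} (v : Fin N → ℝ) :
    v = ∑ i, v i • (Pi.single i 1 : Fin N → ℝ) := by
  funext j
  simp [Finset.sum_apply, Pi.single_apply]

lemma pi_pi_decomp {D N : ℕ} (w : Fin D → Fin N → ℝ) :
    w = ∑ ρ, ∑ i, w ρ i • (Pi.single ρ (Pi.single i 1) : Fin D → Fin N → ℝ) := by
  funext ρ' j'
  simp [Finset.sum_apply, Pi.single_apply, apply_ite (fun g : Fin N → ℝ => g j'),
    Finset.sum_ite_eq]

lemma clm_left {D N : ℕ} (T : (Fin N → ℝ) × (Fin D → Fin N → ℝ) →L[ℝ] ℝ) (v : Fin N → ℝ) :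
    T (v, 0) = ∑ i, v i * T (Pi.single i 1, 0) := by
  have h : ((v, 0) : (Fin N → ℝ) × (Fin D → Fin N → ℝ))
      = ∑ i, v i • (((Pi.single i 1 : Fin N → ℝ), (0 : Fin D → Fin N → ℝ))
          : (Fin N → ℝ) × (Fin D → Fin N → ℝ)) := by
    rw [Prod.ext_iff]
    refine ⟨?_, ?_⟩
    · rw [Prod.fst_sum]; simpa using pi_decomp v
    · rw [Prod.snd_sum]; simp
  rw [h, map_sum]
  simp only [map_smul, smul_eq_mul]

lemma clm_right {D N : ℕ} (T : (Fin N → ℝ) × (Fin D → Fin N → ℝ) →L[ℝ] ℝ) (w : Fin D → Fin N → ℝ) :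
    T (0, w) = ∑ ρ, ∑ i, w ρ i * T (0, Pi.single ρ (Pi.single i 1)) := by
  have h : ((0, w) : (Fin N → ℝ) × (Fin D → Fin N → ℝ))
      = ∑ ρ, ∑ i, w ρ i • (((0 : Fin N → ℝ), (Pi.single ρ (Pi.single i 1) : Fin D → Fin N → ℝ))
          : (Fin N → ℝ) × (Fin D → Fin N → ℝ)) := by
    rw [Prod.ext_iff]
    refine ⟨?_, ?_⟩
    · simp [Prod.fst_sum]
    · simp only [Prod.snd_sum, Prod.smul_mk, smul_zero]
      exact pi_pi_decomp w
  rw [h, map_sum]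
  simp only [map_sum, map_smul, smul_eq_mul]

/-- **Local conservation of the stress-energy tensor for a first-order
Lagrangian field theory.**  If `φ` satisfies the Euler–Lagrange equations for
the Lagrangian density `L(u, p)` (`u` the fields, `p` their first derivatives),
then the mixed stress-energy tensor
`Θ^μ_ν = δ^μ_ν L − ∑ i (∂L/∂p_μ^i) ∂_ν φ^i` satisfies `∑ μ, ∂_μ Θ^μ_ν = 0`. -/
theorem stress_energy_tensor_locally_conserved
    (D N : ℕ) (hD : 1 ≤ D) (hN : 1 ≤ N)
    (L : (Fin N → ℝ) × (Fin D → Fin N → ℝ) → ℝ) (hL : ContDiff ℝ 2 L)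
    (φ : (Fin D → ℝ) → (Fin N → ℝ)) (hφ : ContDiff ℝ 2 φ)
    (hEL : ∀ (i : Fin N) (x : Fin D → ℝ),
      fderiv ℝ L (φ x, fun μ j => fderiv ℝ φ x (Pi.single μ 1) j) (Pi.single i 1, 0)
        = ∑ μ, fderiv ℝ
            (fun y => fderiv ℝ L (φ y, fun ρ j => fderiv ℝ φ y (Pi.single ρ 1) j)
              (0, Pi.single μ (Pi.single i 1)))
            x (Pi.single μ 1)) :
    ∀ (ν : Fin D) (x : Fin D → ℝ),
      ∑ μ, fderiv ℝ
        (fun y =>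
          (if μ = ν then (1 : ℝ) else 0)
              * L (φ y, fun ρ j => fderiv ℝ φ y (Pi.single ρ 1) j)
            - ∑ i, fderiv ℝ L (φ y, fun ρ j => fderiv ℝ φ y (Pi.single ρ 1) j)
                (0, Pi.single μ (Pi.single i 1)) * fderiv ℝ φ y (Pi.single ν 1) i)
        x (Pi.single μ 1) = 0 := by
  intro ν x
  have hφ1 : ContDiff ℝ 1 φ := hφ.of_le one_le_two
  have hdφ : ContDiff ℝ 1 (fderiv ℝ φ) := hφ.fderiv_right (by norm_num)
  have hL' : ContDiff ℝ 1 (fderiv ℝ L) := hL.fderiv_right (by norm_num)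
  set A : ((Fin D → ℝ) →L[ℝ] (Fin N → ℝ)) →L[ℝ] (Fin D → Fin N → ℝ) :=
    ContinuousLinearMap.pi
      (fun ρ => ContinuousLinearMap.apply ℝ (Fin N → ℝ) (Pi.single ρ 1)) with hA
  have hf'' : HasFDerivAt (fderiv ℝ φ) (fderiv ℝ (fderiv ℝ φ) x) x :=
    (hdφ.differentiable one_ne_zero x).hasFDerivAt
  set f'' := fderiv ℝ (fderiv ℝ φ) x with hf''def
  -- the configuration map Φ and its derivative at x
  have hΦx : HasFDerivAt
      (fun y => ((φ y, fun ρ j => fderiv ℝ φ y (Pi.single ρ 1) j)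
        : (Fin N → ℝ) × (Fin D → Fin N → ℝ)))
      ((fderiv ℝ φ x).prod (A.comp f'')) x :=
    ((hφ1.differentiable one_ne_zero x).hasFDerivAt).prodMk ((A.hasFDerivAt).comp x hf'')
  have hsym : ∀ v w, f'' v w = f'' w v := fun v w =>
    (hφ.contDiffAt.isSymmSndFDerivAt (by simp)) v w
  set z : (Fin N → ℝ) × (Fin D → Fin N → ℝ) :=
    (φ x, fun ρ j => fderiv ℝ φ x (Pi.single ρ 1) j) with hz
  -- derivative of F = L ∘ Φ
  have hFd : HasFDerivAt
      (fun y => L (φ y, fun ρ j => fderiv ℝ φ y (Pi.single ρ 1) j))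
      ((fderiv ℝ L z).comp ((fderiv ℝ φ x).prod (A.comp f''))) x :=
    ((hL.differentiable two_ne_zero z).hasFDerivAt).comp x hΦx
  -- differentiability of the momenta π^μ_i
  have hπ : ∀ (μ : Fin D) (i : Fin N),
      DifferentiableAt ℝ
        (fun y => fderiv ℝ L (φ y, fun ρ j => fderiv ℝ φ y (Pi.single ρ 1) j)
          (0, Pi.single μ (Pi.single i 1))) x := by
    intro μ i
    exact ((ContinuousLinearMap.apply ℝ ℝ
        ((0, Pi.single μ (Pi.single i 1)) : (Fin N → ℝ) × (Fin D → Fin N → ℝ))).differentiableAt).comp x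
      ((((hL'.differentiable one_ne_zero z).hasFDerivAt).comp x hΦx).differentiableAt)
  -- derivatives of ∂_ν φ^i
  have hg : ∀ i : Fin N, HasFDerivAt (fun y => fderiv ℝ φ y (Pi.single ν 1) i)
      (((ContinuousLinearMap.proj i).comp
        (ContinuousLinearMap.apply ℝ (Fin N → ℝ) (Pi.single ν 1))).comp f'') x := by
    intro i
    have B : ((Fin D → ℝ) →L[ℝ] (Fin N → ℝ)) →L[ℝ] ℝ :=
      (ContinuousLinearMap.proj i).comp
        (ContinuousLinearMap.apply ℝ (Fin N → ℝ) (Pi.single ν 1))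
    exact ((((ContinuousLinearMap.proj i).comp
      (ContinuousLinearMap.apply ℝ (Fin N → ℝ) (Pi.single ν 1))).hasFDerivAt
        (x := fderiv ℝ φ x)).comp x hf'' :)
  have hgval : ∀ (i : Fin N) (μ : Fin D),
      fderiv ℝ (fun y => fderiv ℝ φ y (Pi.single ν 1) i) x (Pi.single μ 1)
        = f'' (Pi.single μ 1) (Pi.single ν 1) i := by
    intro i μ
    rw [(hg i).fderiv]; rfl
  -- value of ∂_ν F
  have hFν : fderiv ℝ (fun y => L (φ y, fun ρ j => fderiv ℝ φ y (Pi.single ρ 1) j)) x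
        (Pi.single ν 1)
      = ∑ i, fderiv ℝ φ x (Pi.single ν 1) i * fderiv ℝ L z (Pi.single i 1, 0)
        + ∑ μ, ∑ i, f'' (Pi.single ν 1) (Pi.single μ 1) i
            * fderiv ℝ L z (0, Pi.single μ (Pi.single i 1)) := by
    rw [hFd.fderiv]
    have hsplit : (((fderiv ℝ φ x).prod (A.comp f'')) (Pi.single ν 1))
        = ((fderiv ℝ φ x (Pi.single ν 1), 0) : (Fin N → ℝ) × (Fin D → Fin N → ℝ))
          + ((0, A (f'' (Pi.single ν 1))) : (Fin N → ℝ) × (Fin D → Fin N → ℝ)) := by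
      rw [Prod.ext_iff]; constructor <;> simp
    rw [ContinuousLinearMap.comp_apply, hsplit, map_add, clm_left, clm_right]
    rfl
  -- term-by-term expansion of the divergence
  have hterm : ∀ μ : Fin D,
      fderiv ℝ
        (fun y =>
          (if μ = ν then (1 : ℝ) else 0)
              * L (φ y, fun ρ j => fderiv ℝ φ y (Pi.single ρ 1) j)
            - ∑ i, fderiv ℝ L (φ y, fun ρ j => fderiv ℝ φ y (Pi.single ρ 1) j)
                (0, Pi.single μ (Pi.single i 1)) * fderiv ℝ φ y (Pi.single ν 1) i)
        x (Pi.single μ 1)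
      = (if μ = ν then (1 : ℝ) else 0)
          * fderiv ℝ (fun y => L (φ y, fun ρ j => fderiv ℝ φ y (Pi.single ρ 1) j)) x
              (Pi.single μ 1)
        - ∑ i,
            (fderiv ℝ L z (0, Pi.single μ (Pi.single i 1))
                * (f'' (Pi.single μ 1) (Pi.single ν 1) i)
              + fderiv ℝ φ x (Pi.single ν 1) i
                * fderiv ℝ
                    (fun y => fderiv ℝ L (φ y, fun ρ j => fderiv ℝ φ y (Pi.single ρ 1) j)
                      (0, Pi.single μ (Pi.single i 1))) x (Pi.single μ 1)) := by
    intro μ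
    have h2 : ∀ i ∈ Finset.univ, DifferentiableAt ℝ
        (fun y => fderiv ℝ L (φ y, fun ρ j => fderiv ℝ φ y (Pi.single ρ 1) j)
          (0, Pi.single μ (Pi.single i 1)) * fderiv ℝ φ y (Pi.single ν 1) i) x :=
      fun i _ => (hπ μ i).mul (hg i).differentiableAt
    rw [fderiv_fun_sub ((hFd.differentiableAt).const_mul _) (DifferentiableAt.fun_sum h2),
      fderiv_const_mul hFd.differentiableAt, fderiv_fun_sum h2]
    rw [ContinuousLinearMap.sub_apply, ContinuousLinearMap.smul_apply, smul_eq_mul,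
      ContinuousLinearMap.sum_apply]
    congr 1
    refine Finset.sum_congr rfl fun i _ => ?_
    rw [fderiv_fun_mul (hπ μ i) (hg i).differentiableAt, ContinuousLinearMap.add_apply,
      ContinuousLinearMap.smul_apply, ContinuousLinearMap.smul_apply, smul_eq_mul, smul_eq_mul,
      hgval i μ]
  -- now assemble
  calc ∑ μ, fderiv ℝ
        (fun y =>
          (if μ = ν then (1 : ℝ) else 0)
              * L (φ y, fun ρ j => fderiv ℝ φ y (Pi.single ρ 1) j)
            - ∑ i, fderiv ℝ L (φ y, fun ρ j => fderiv ℝ φ y (Pi.single ρ 1) j)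
                (0, Pi.single μ (Pi.single i 1)) * fderiv ℝ φ y (Pi.single ν 1) i)
        x (Pi.single μ 1)
      = ∑ μ, ((if μ = ν then (1 : ℝ) else 0)
          * fderiv ℝ (fun y => L (φ y, fun ρ j => fderiv ℝ φ y (Pi.single ρ 1) j)) x
              (Pi.single μ 1)
        - ∑ i,
            (fderiv ℝ L z (0, Pi.single μ (Pi.single i 1))
                * (f'' (Pi.single μ 1) (Pi.single ν 1) i)
              + fderiv ℝ φ x (Pi.single ν 1) i
                * fderiv ℝ
                    (fun y => fderiv ℝ L (φ y, fun ρ j => fderiv ℝ φ y (Pi.single ρ 1) j)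
                      (0, Pi.single μ (Pi.single i 1))) x (Pi.single μ 1))) :=
        Finset.sum_congr rfl fun μ _ => hterm μ
    _ = 0 := by
        rw [Finset.sum_sub_distrib]
        have hδ : ∑ μ, (if μ = ν then (1 : ℝ) else 0)
            * fderiv ℝ (fun y => L (φ y, fun ρ j => fderiv ℝ φ y (Pi.single ρ 1) j)) x
                (Pi.single μ 1)
          = fderiv ℝ (fun y => L (φ y, fun ρ j => fderiv ℝ φ y (Pi.single ρ 1) j)) x
              (Pi.single ν 1) := by
          simp [ite_mul, Finset.sum_ite_eq]
        rw [hδ, hFν]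
        have hsplit2 : ∑ μ, ∑ i,
            (fderiv ℝ L z (0, Pi.single μ (Pi.single i 1))
                * (f'' (Pi.single μ 1) (Pi.single ν 1) i)
              + fderiv ℝ φ x (Pi.single ν 1) i
                * fderiv ℝ
                    (fun y => fderiv ℝ L (φ y, fun ρ j => fderiv ℝ φ y (Pi.single ρ 1) j)
                      (0, Pi.single μ (Pi.single i 1))) x (Pi.single μ 1))
          = (∑ μ, ∑ i, f'' (Pi.single ν 1) (Pi.single μ 1) i
              * fderiv ℝ L z (0, Pi.single μ (Pi.single i 1)))
            + ∑ i, fderiv ℝ φ x (Pi.single ν 1) i * fderiv ℝ L z (Pi.single i 1, 0) := by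
          rw [Finset.sum_congr rfl (fun μ _ => Finset.sum_add_distrib), Finset.sum_add_distrib]
          congr 1
          · refine Finset.sum_congr rfl fun μ _ => Finset.sum_congr rfl fun i _ => ?_
            rw [hsym (Pi.single μ 1) (Pi.single ν 1), mul_comm]
          · rw [Finset.sum_comm]
            refine Finset.sum_congr rfl fun i _ => ?_
            rw [← Finset.mul_sum, ← hEL i x]
        rw [hsplit2]
        ring
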